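/- Let p_1 ≤ p_2 ≤ p_3 ≤ p_4 be nonnegative integers satisfying either (i) p_1 = p_2 = p_3 and p_4 ≥ p_1 + 2, or (ii) p_2 = p_3 = p_4 and p_4 ≥ p_1 + 2, and let n satisfy binom(n+2,2) = Σ_{i=1}^4 binom(p_i+2,2). Then the Hermite interpolation scheme on 4 nodes in ℝ² is singular: for every choice of pairwise distinct points X_1, X_2, X_3, X_4 ∈ ℝ² there exists a nonzero polynomial f in two variables of total degree at most n such that ∂^α f(X_q) = 0 for all 1 ≤ q ≤ 4 and all multi-indices α ∈ ℕ² with |α| ≤ p_q. -/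

import Mathlib

open MvPolynomial

/-- The iterated partial derivative `∂^α` as a linear endomorphism of `ℝ[x_1,…,x_d]`. -/
noncomputable def pderivPow {d : ℕ} (α : Fin d → ℕ) :
    Module.End ℝ (MvPolynomial (Fin d) ℝ) :=
  ((List.finRange d).map fun i => ((MvPolynomial.pderiv i).toLinearMap ^ α i)).prod

/-- The Hermite ideal `I(X,p)`, as a set: all polynomials whose partial derivatives of
order up to `p q` all vanish at `X q`, for every `q`. -/
def hermiteSet {d m : ℕ} (X : Fin m → (Fin d → ℝ)) (p : Fin m → ℕ) :
    Set (MvPolynomial (Fin d) ℝ) :=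
  {f | ∀ q, ∀ α : Fin d → ℕ, (∑ i, α i) ≤ p q → MvPolynomial.eval (X q) (pderivPow α f) = 0}

open Finset



noncomputable abbrev D (i : Fin 2) : Module.End ℝ (MvPolynomial (Fin 2) ℝ) :=
  (MvPolynomial.pderiv i).toLinearMap

lemma pderivPow_two (α : Fin 2 → ℕ) : pderivPow α = D 0 ^ α 0 * D 1 ^ α 1 := by
  simp [pderivPow, List.finRange_succ]

lemma pderiv_comm' (i j : Fin 2) (f : MvPolynomial (Fin 2) ℝ) :
    pderiv i (pderiv j f) = pderiv j (pderiv i f) := by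
  have hX : ∀ u v w : Fin 2, pderiv u (pderiv v (X w) : MvPolynomial (Fin 2) ℝ) = 0 := by
    intro u v w
    rcases eq_or_ne w v with h | h
    · subst h; rw [pderiv_X_self, pderiv_one]
    · rw [pderiv_X_of_ne h, map_zero]
  induction f using MvPolynomial.induction_on with
  | C a => simp
  | add f g hf hg => simp [hf, hg]
  | mul_X f k ih => simp only [pderiv_mul, map_add, pderiv_mul, ih, hX]; ring

lemma D_comm : Commute (D 0) (D 1) := by
  refine LinearMap.ext fun f => ?_
  exact pderiv_comm' 0 1 f

lemma pderivPow_shift0 (a b : ℕ) (f : MvPolynomial (Fin 2) ℝ) :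
    pderivPow ![a, b] (pderiv 0 f) = pderivPow ![a + 1, b] f := by
  have : pderivPow ![a+1, b] = pderivPow ![a, b] * D 0 := by
    rw [pderivPow_two, pderivPow_two]
    simp only [Matrix.cons_val_zero, Matrix.cons_val_one, Matrix.head_cons]
    rw [pow_succ, mul_assoc, (D_comm.pow_right b).eq, ← mul_assoc]
  rw [this]; rfl

lemma pderivPow_shift1 (a b : ℕ) (f : MvPolynomial (Fin 2) ℝ) :
    pderivPow ![a, b] (pderiv 1 f) = pderivPow ![a, b + 1] f := by
  have : pderivPow ![a, b+1] = pderivPow ![a, b] * D 1 := by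
    rw [pderivPow_two, pderivPow_two]
    simp only [Matrix.cons_val_zero, Matrix.cons_val_one, Matrix.head_cons]
    rw [mul_assoc, pow_succ]
  rw [this]; rfl

lemma pderivPow_eta (α : Fin 2 → ℕ) : pderivPow α = pderivPow ![α 0, α 1] := by
  rw [pderivPow_two, pderivPow_two]; simp

lemma pderivPow_zero' (f : MvPolynomial (Fin 2) ℝ) : pderivPow ![0,0] f = f := by
  rw [pderivPow_two]; simp
/-- `f` vanishes to order `≥ k` at `x`. -/
def Van (x : Fin 2 → ℝ) (k : ℕ) (f : MvPolynomial (Fin 2) ℝ) : Prop :=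
  ∀ a b : ℕ, a + b < k → eval x (pderivPow ![a, b] f) = 0

lemma Van.mono {x k l f} (h : Van x k f) (hlk : l ≤ k) : Van x l f :=
  fun a b hab => h a b (lt_of_lt_of_le hab hlk)

lemma Van.eval_zero {x k f} (h : Van x k f) (hk : 0 < k) : eval x f = 0 := by
  have := h 0 0 hk
  rwa [pderivPow_zero'] at this

lemma Van.pderiv0 {x k f} (h : Van x k f) : Van x (k - 1) (pderiv 0 f) := by
  intro a b hab
  rw [pderivPow_shift0]
  exact h (a+1) b (by omega)

lemma Van.pderiv1 {x k f} (h : Van x k f) : Van x (k - 1) (pderiv 1 f) := by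
  intro a b hab
  rw [pderivPow_shift1]
  exact h a (b+1) (by omega)

/-- auxiliary: ideal property, pointwise form. -/
lemma van_mul_aux (x : Fin 2 → ℝ) :
    ∀ s : ℕ, ∀ f g : MvPolynomial (Fin 2) ℝ,
      (∀ a b : ℕ, a + b ≤ s → eval x (pderivPow ![a, b] g) = 0) →
      ∀ a b : ℕ, a + b ≤ s → eval x (pderivPow ![a, b] (f * g)) = 0 := by
  intro s
  induction s with
  | zero =>
    intro f g hg a b hab
    obtain ⟨rfl, rfl⟩ : a = 0 ∧ b = 0 := by omega
    rw [pderivPow_zero', eval_mul]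
    rw [show eval x g = 0 by simpa [pderivPow_zero'] using hg 0 0 le_rfl]
    ring
  | succ s ih =>
    intro f g hg a b hab
    rcases Nat.eq_zero_or_pos b with rfl | hb
    · rcases Nat.eq_zero_or_pos a with rfl | ha
      · rw [pderivPow_zero', eval_mul]
        rw [show eval x g = 0 by simpa [pderivPow_zero'] using hg 0 0 (by omega)]
        ring
      · obtain ⟨a', rfl⟩ : ∃ a', a = a' + 1 := ⟨a - 1, by omega⟩
        rw [← pderivPow_shift0, pderiv_mul, map_add, map_add]
        have h1 : eval x (pderivPow ![a', 0] (pderiv 0 f * g)) = 0 :=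
          ih (pderiv 0 f) g (fun a b hab => hg a b (by omega)) a' 0 (by omega)
        have h2 : eval x (pderivPow ![a', 0] (f * pderiv 0 g)) = 0 := by
          refine ih f (pderiv 0 g) (fun a b hab => ?_) a' 0 (by omega)
          rw [pderivPow_shift0]; exact hg (a+1) b (by omega)
        rw [h1, h2]; ring
    · obtain ⟨b', rfl⟩ : ∃ b', b = b' + 1 := ⟨b - 1, by omega⟩
      rw [← pderivPow_shift1, pderiv_mul, map_add, map_add]
      have h1 : eval x (pderivPow ![a, b'] (pderiv 1 f * g)) = 0 :=
        ih (pderiv 1 f) g (fun a b hab => hg a b (by omega)) a b' (by omega)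
      have h2 : eval x (pderivPow ![a, b'] (f * pderiv 1 g)) = 0 := by
        refine ih f (pderiv 1 g) (fun a b hab => ?_) a b' (by omega)
        rw [pderivPow_shift1]; exact hg a (b+1) (by omega)
      rw [h1, h2]; ring

lemma Van.mul_left {x k g} (h : Van x k g) (f : MvPolynomial (Fin 2) ℝ) :
    Van x k (f * g) := by
  intro a b hab
  exact van_mul_aux x (a + b) f g (fun a' b' h' => h a' b' (by omega)) a b le_rfl

lemma Van.mul {x} : ∀ s k l : ℕ, k + l ≤ s → ∀ f g : MvPolynomial (Fin 2) ℝ,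
    Van x k f → Van x l g → Van x (k + l) (f * g) := by
  intro s
  induction s with
  | zero =>
    intro k l hs f g hf hg
    obtain ⟨rfl, rfl⟩ : k = 0 ∧ l = 0 := by omega
    intro a b hab; omega
  | succ s ih =>
    intro k l hs f g hf hg
    rcases Nat.eq_zero_or_pos k with rfl | hk
    · simpa using hg.mul_left f
    rcases Nat.eq_zero_or_pos l with rfl | hl
    · rw [mul_comm f g]; simpa using hf.mul_left g
    intro a b hab
    rcases Nat.eq_zero_or_pos b with rfl | hb
    · rcases Nat.eq_zero_or_pos a with rfl | ha
      · rw [pderivPow_zero', eval_mul, hf.eval_zero hk]; ring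
      · obtain ⟨a', rfl⟩ : ∃ a', a = a' + 1 := ⟨a - 1, by omega⟩
        rw [← pderivPow_shift0, pderiv_mul, map_add, map_add]
        have h1 : eval x (pderivPow ![a', 0] (pderiv 0 f * g)) = 0 := by
          have := ih (k-1) l (by omega) (pderiv 0 f) g hf.pderiv0 hg
          exact this a' 0 (by omega)
        have h2 : eval x (pderivPow ![a', 0] (f * pderiv 0 g)) = 0 := by
          have := ih k (l-1) (by omega) f (pderiv 0 g) hf hg.pderiv0
          exact this a' 0 (by omega)
        rw [h1, h2]; ring
    · obtain ⟨b', rfl⟩ : ∃ b', b = b' + 1 := ⟨b - 1, by omega⟩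
      rw [← pderivPow_shift1, pderiv_mul, map_add, map_add]
      have h1 : eval x (pderivPow ![a, b'] (pderiv 1 f * g)) = 0 := by
        have := ih (k-1) l (by omega) (pderiv 1 f) g hf.pderiv1 hg
        exact this a b' (by omega)
      have h2 : eval x (pderivPow ![a, b'] (f * pderiv 1 g)) = 0 := by
        have := ih k (l-1) (by omega) f (pderiv 1 g) hf hg.pderiv1
        exact this a b' (by omega)
      rw [h1, h2]; ring
/-- pairs `(a,b)` with `a + b < r`. -/
def Dfin (r : ℕ) : Finset (ℕ × ℕ) := (range r).biUnion Finset.HasAntidiagonal.antidiagonal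

lemma mem_Dfin {r : ℕ} {ab : ℕ × ℕ} : ab ∈ Dfin r ↔ ab.1 + ab.2 < r := by
  simp only [Dfin, mem_biUnion, mem_range, Finset.HasAntidiagonal.mem_antidiagonal]
  constructor
  · rintro ⟨k, hk, rfl⟩; exact hk
  · intro h; exact ⟨ab.1 + ab.2, h, rfl⟩

lemma sum_range_succ_choose (r : ℕ) : ∑ k ∈ range r, (k + 1) = (r + 1).choose 2 := by
  induction r with
  | zero => simp
  | succ r ih =>
    rw [Finset.sum_range_succ, ih]
    have h : (r + 1 + 1).choose 2 = (r + 1).choose 1 + (r + 1).choose 2 :=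
      Nat.choose_succ_succ (r + 1) 1
    rw [Nat.choose_one_right] at h
    omega

lemma card_Dfin (r : ℕ) : (Dfin r).card = (r + 1).choose 2 := by
  rw [Dfin, card_biUnion, ← sum_range_succ_choose]
  · exact Finset.sum_congr rfl fun k _ => Nat.card_antidiagonal k
  · intro u _ v _ huv
    simp only [Finset.disjoint_left, Finset.HasAntidiagonal.mem_antidiagonal]
    rintro ⟨a, b⟩ h1 h2; exact huv (h1 ▸ h2.symm ▸ rfl)

/-- the exponent finsupp of the monomial `x^a y^b`. -/
noncomputable def msup (ab : ℕ × ℕ) : Fin 2 →₀ ℕ := Finsupp.single 0 ab.1 + Finsupp.single 1 ab.2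

lemma msup_sum (ab : ℕ × ℕ) : (msup ab).sum (fun _ e => e) = ab.1 + ab.2 := by
  rw [msup, Finsupp.sum_add_index' (fun _ => rfl) (fun _ _ _ => rfl),
    Finsupp.sum_single_index rfl, Finsupp.sum_single_index rfl]

lemma msup_injective : Function.Injective msup := by
  intro ab cd h
  have h0 := DFunLike.congr_fun h (0 : Fin 2)
  have h1 := DFunLike.congr_fun h (1 : Fin 2)
  simp only [msup, Finsupp.add_apply, Finsupp.single_eq_same,
    Finsupp.single_eq_of_ne (show (0 : Fin 2) ≠ 1 by decide),
    Finsupp.single_eq_of_ne (show (1 : Fin 2) ≠ 0 by decide)] at h0 h1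
  exact Prod.ext (by omega) (by omega)

lemma finrank_restrict_ge (N : ℕ) :
    (N + 2).choose 2 ≤ Module.finrank ℝ (restrictTotalDegree (Fin 2) ℝ N) := by
  classical
  set V := restrictTotalDegree (Fin 2) ℝ N
  have hmem : ∀ ab : ℕ × ℕ, ab ∈ Dfin (N + 1) →
      (monomial (msup ab) (1 : ℝ)) ∈ V := by
    intro ab hab
    rw [mem_restrictTotalDegree, totalDegree_monomial _ one_ne_zero, msup_sum]
    have := mem_Dfin.mp hab; omega
  set v : ↥(Dfin (N + 1)) → V := fun ab => ⟨monomial (msup ab.1) 1, hmem ab.1 ab.2⟩ with hv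
  have hli : LinearIndependent ℝ v := by
    apply LinearIndependent.of_comp V.subtype
    have : (V.subtype ∘ v) = (basisMonomials (Fin 2) ℝ) ∘ (fun ab : ↥(Dfin (N+1)) => msup ab.1) := by
      funext ab; simp [hv, coe_basisMonomials]
    rw [this]
    exact (basisMonomials (Fin 2) ℝ).linearIndependent.comp _
      (msup_injective.comp fun a b hab => Subtype.ext hab)
  have := hli.fintype_card_le_finrank
  rwa [Fintype.card_coe, card_Dfin] at this

set_option synthInstance.maxHeartbeats 1000000 in
/-- Existence of a nonzero polynomial of bounded degree with prescribed vanishing,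
by dimension count. -/
lemma exists_van_poly (N : ℕ) (r : Fin 4 → ℕ) (X : Fin 4 → (Fin 2 → ℝ))
    (hcard : ∑ q, (r q + 1).choose 2 < (N + 2).choose 2) :
    ∃ g : MvPolynomial (Fin 2) ℝ, g ≠ 0 ∧ g.totalDegree ≤ N ∧ ∀ q, Van (X q) (r q) g := by
  classical
  set V := restrictTotalDegree (Fin 2) ℝ N
  let ι := (q : Fin 4) × ↥(Dfin (r q))
  let Φ : V →ₗ[ℝ] (ι → ℝ) := LinearMap.pi fun c =>
    (MvPolynomial.aeval (X c.1)).toLinearMap ∘ₗ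
      (pderivPow ![c.2.1.1, c.2.1.2]) ∘ₗ V.subtype
  have hcardι : Fintype.card ι = ∑ q, (r q + 1).choose 2 := by
    rw [Fintype.card_sigma]
    exact Finset.sum_congr rfl fun q _ => by rw [Fintype.card_coe, card_Dfin]
  have hker : 0 < Module.finrank ℝ (LinearMap.ker Φ) := by
    have hrn := LinearMap.finrank_range_add_finrank_ker Φ
    have h1 : Module.finrank ℝ (LinearMap.range Φ) ≤ Fintype.card ι := by
      have := Submodule.finrank_le (LinearMap.range Φ)
      rwa [Module.finrank_pi, Fintype.card] at this
    have h2 : (N + 2).choose 2 ≤ Module.finrank ℝ V := finrank_restrict_ge N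
    omega
  have : Nontrivial (LinearMap.ker Φ) := Module.nontrivial_of_finrank_pos hker
  obtain ⟨x, hx⟩ := exists_ne (0 : LinearMap.ker Φ)
  refine ⟨(x : V), ?_, ?_, ?_⟩
  · intro h
    exact hx (Subtype.ext (Subtype.ext h))
  · exact (mem_restrictTotalDegree _ _ _).mp (x : V).2
  · intro q a b hab
    have hmem : ((a, b) : ℕ × ℕ) ∈ Dfin (r q) := mem_Dfin.mpr hab
    have hx0 : Φ x.1 = 0 := x.2
    have := congrFun hx0 (⟨q, ⟨(a, b), hmem⟩⟩ : ι)
    simpa [Φ] using this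

lemma two_mul_choose (k : ℕ) : 2 * (k + 1).choose 2 = k * (k + 1) := by
  induction k with
  | zero => decide
  | succ k ih =>
    have h : (k + 1 + 1).choose 2 = (k + 1).choose 1 + (k + 1).choose 2 :=
      Nat.choose_succ_succ (k + 1) 1
    rw [Nat.choose_one_right] at h
    calc 2 * (k + 1 + 1).choose 2 = 2 * (k + 1) + 2 * (k + 1).choose 2 := by omega
    _ = 2 * (k + 1) + k * (k + 1) := by rw [ih]
    _ = (k + 1) * (k + 1 + 1) := by ring

lemma choose_rec (m : ℕ) : (m + 2).choose 2 = (m + 1).choose 2 + (m + 1) := by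
  nlinarith [two_mul_choose (m + 1), two_mul_choose m]

lemma arith_key {p0 p1 p2 p3 : ℕ} (h01 : p0 ≤ p1) (h12 : p1 ≤ p2) (h23 : p2 ≤ p3)
    (hcase : (p0 = p1 ∧ p1 = p2 ∧ p0 + 2 ≤ p3) ∨ (p1 = p2 ∧ p2 = p3 ∧ p0 + 2 ≤ p3)) :
    (p0+2).choose 2 + (p1+2).choose 2 + (p2+2).choose 2 + (p3+2).choose 2
      < (p2 + p3 + 3).choose 2 := by
  have e0 := two_mul_choose (p0 + 1)
  have e1 := two_mul_choose (p1 + 1)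
  have e2 := two_mul_choose (p2 + 1)
  have e3 := two_mul_choose (p3 + 1)
  have e4 := two_mul_choose (p2 + p3 + 2)
  rcases hcase with ⟨ha, hb, hc⟩ | ⟨ha, hb, hc⟩
  · subst ha; subst hb; nlinarith
  · subst ha; subst hb; nlinarith

lemma arith_main {n p0 p1 p2 p3 : ℕ} (h01 : p0 ≤ p1) (h12 : p1 ≤ p2) (h23 : p2 ≤ p3)
    (hcase : (p0 = p1 ∧ p1 = p2 ∧ p0 + 2 ≤ p3) ∨ (p1 = p2 ∧ p2 = p3 ∧ p0 + 2 ≤ p3))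
    (hdim : (n+2).choose 2 =
      (p0+2).choose 2 + (p1+2).choose 2 + (p2+2).choose 2 + (p3+2).choose 2) :
    1 ≤ n ∧
    (p0+2).choose 2 + (p1+2).choose 2 + (p2+1).choose 2 + (p3+1).choose 2
      < (n+1).choose 2 := by
  have hkey := arith_key h01 h12 h23 hcase
  have hp3 : 2 ≤ p3 := by rcases hcase with ⟨_, _, hc⟩ | ⟨_, _, hc⟩ <;> omega
  have hn1 : 1 ≤ n := by
    by_contra h
    have hn0 : n = 0 := by omega
    subst hn0
    have h6 : (2+2).choose 2 ≤ (p3+2).choose 2 := Nat.choose_le_choose 2 (by omega)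
    have : (0+2).choose 2 = 1 := by decide
    have : (2+2).choose 2 = 6 := by decide
    omega
  have hle : n ≤ p2 + p3 := by
    by_contra h
    have : (p2 + p3 + 3).choose 2 ≤ (n + 2).choose 2 := Nat.choose_le_choose 2 (by omega)
    omega
  have r0 := choose_rec n
  have r2 := choose_rec p2
  have r3 := choose_rec p3
  exact ⟨hn1, by omega⟩

theorem singular_four_nodes_equal_orders {n : ℕ} (p : Fin 4 → ℕ) (hmono : Monotone p)
    (hcase : (p 0 = p 1 ∧ p 1 = p 2 ∧ p 0 + 2 ≤ p 3) ∨
             (p 1 = p 2 ∧ p 2 = p 3 ∧ p 0 + 2 ≤ p 3))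
    (hdim : Nat.choose (n + 2) 2 = ∑ q, Nat.choose (p q + 2) 2)
    (X : Fin 4 → (Fin 2 → ℝ)) (hX : Function.Injective X) :
    ∃ f : MvPolynomial (Fin 2) ℝ, f ≠ 0 ∧ f.totalDegree ≤ n ∧ f ∈ hermiteSet X p := by
  rw [Fin.sum_univ_four] at hdim
  have h01 : p 0 ≤ p 1 := hmono (by decide : (0:Fin 4) ≤ 1)
  have h12 : p 1 ≤ p 2 := hmono (by decide : (1:Fin 4) ≤ 2)
  have h23 : p 2 ≤ p 3 := hmono (by decide : (2:Fin 4) ≤ 3)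
  obtain ⟨hn1, hcount⟩ := arith_main h01 h12 h23 hcase hdim
  -- the line through X 2 and X 3
  set A : ℝ := X 3 1 - X 2 1 with hA
  set B : ℝ := X 2 0 - X 3 0 with hB
  set w : ℝ := -(A * X 2 0 + B * X 2 1) with hw
  set L : MvPolynomial (Fin 2) ℝ :=
    C A * MvPolynomial.X 0 + C B * MvPolynomial.X 1 + C w with hL
  have hevalL : ∀ z : Fin 2 → ℝ, eval z L = A * z 0 + B * z 1 + w := by
    intro z; simp [hL]
  have hne23 : X 2 ≠ X 3 := fun h => (by decide : (2:Fin 4) ≠ 3) (hX h)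
  have hAB : A ^ 2 + B ^ 2 ≠ 0 := by
    intro h
    apply hne23
    have hA0 : A = 0 := by nlinarith [sq_nonneg A, sq_nonneg B]
    have hB0 : B = 0 := by nlinarith [sq_nonneg A, sq_nonneg B]
    have e0 : X 2 0 = X 3 0 := by rw [hB] at hB0; linarith
    have e1 : X 2 1 = X 3 1 := by rw [hA] at hA0; linarith
    funext k
    fin_cases k
    · exact e0
    · exact e1
  have hLne : L ≠ 0 := by
    intro h
    apply hAB
    have := hevalL ![X 2 0 + A, X 2 1 + B]
    rw [h, map_zero] at this
    simp only [Matrix.cons_val_zero, Matrix.cons_val_one, Matrix.head_cons] at this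
    rw [hw] at this
    nlinarith [this]
  have hdegL : L.totalDegree ≤ 1 := by
    refine le_trans (totalDegree_add _ _) (max_le (le_trans (totalDegree_add _ _)
      (max_le ?_ ?_)) ?_)
    · exact le_trans (totalDegree_mul _ _) (by simp)
    · exact le_trans (totalDegree_mul _ _) (by simp)
    · simp
  have hL2 : Van (X 2) 1 L := by
    intro a b hab
    obtain ⟨rfl, rfl⟩ : a = 0 ∧ b = 0 := by omega
    rw [pderivPow_zero', hevalL, hw]; ring
  have hL3 : Van (X 3) 1 L := by
    intro a b hab
    obtain ⟨rfl, rfl⟩ : a = 0 ∧ b = 0 := by omega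
    rw [pderivPow_zero', hevalL, hw, hA, hB]; ring
  -- the auxiliary polynomial g
  set r : Fin 4 → ℕ := ![p 0 + 1, p 1 + 1, p 2, p 3] with hr
  obtain ⟨N, hN⟩ : ∃ N, n = N + 1 := ⟨n - 1, by omega⟩
  have hcard : ∑ q, (r q + 1).choose 2 < (N + 2).choose 2 := by
    rw [Fin.sum_univ_four]
    simp only [hr, Matrix.cons_val_zero, Matrix.cons_val_one, Matrix.head_cons,
      Matrix.cons_val_two, Matrix.tail_cons, Matrix.cons_val_three]
    have : N + 2 = n + 1 := by omega
    rw [this]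
    exact hcount
  obtain ⟨g, hg0, hgdeg, hgvan⟩ := exists_van_poly N r X hcard
  refine ⟨L * g, mul_ne_zero hLne hg0, ?_, ?_⟩
  · calc (L * g).totalDegree ≤ L.totalDegree + g.totalDegree := totalDegree_mul _ _
      _ ≤ 1 + N := add_le_add hdegL hgdeg
      _ = n := by omega
  · intro q α hα
    rw [Fin.sum_univ_two] at hα
    have hvan : Van (X q) (p q + 1) (L * g) := by
      have hv0 := hgvan 0
      have hv1 := hgvan 1
      have hv2 := hgvan 2
      have hv3 := hgvan 3
      simp only [hr, Matrix.cons_val_zero, Matrix.cons_val_one, Matrix.head_cons,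
        Matrix.cons_val_two, Matrix.tail_cons, Matrix.cons_val_three] at hv0 hv1 hv2 hv3
      fin_cases q
      · exact hv0.mul_left L
      · exact hv1.mul_left L
      · have := Van.mul (1 + p 2) 1 (p 2) le_rfl L g hL2 hv2
        rwa [add_comm] at this
      · have := Van.mul (1 + p 3) 1 (p 3) le_rfl L g hL3 hv3
        rwa [add_comm] at this
    rw [pderivPow_eta]
    exact hvan (α 0) (α 1) (by omega)
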